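/- Let m be a natural number, let p_m(x) = Σ_{j=0}^m [(2m − j)! m!] / [(2m)! (m − j)! j!] x^j, and let A be an N×N complex Hermitian matrix such that the matrix p_m(iA) is invertible. Then the diagonal Padé approximant r = p_m(−iA) · (p_m(iA))^{−1} is unitary: r^H r = I. -/
import Mathlib

open scoped Matrix

theorem pade_approximant_unitary {N : ℕ} (m : ℕ) (p : Polynomial ℂ)
    (hp : p = ∑ j ∈ Finset.range (m + 1),
      Polynomial.C
          ((((2 * m - j).factorial * m.factorial : ℕ) : ℂ) /
            ((((2 * m).factorial * (m - j).factorial * j.factorial : ℕ)) : ℂ)) *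
        Polynomial.X ^ j)
    (A : Matrix (Fin N) (Fin N) ℂ) (hA : A.IsHermitian)
    (hinv : IsUnit (Polynomial.aeval (Complex.I • A) p)) :
    (Polynomial.aeval ((-Complex.I) • A) p * (Polynomial.aeval (Complex.I • A) p)⁻¹)ᴴ *
        (Polynomial.aeval ((-Complex.I) • A) p * (Polynomial.aeval (Complex.I • A) p)⁻¹) =
      (1 : Matrix (Fin N) (Fin N) ℂ) := by
  set B := Polynomial.aeval (Complex.I • A) p with hB
  set C := Polynomial.aeval ((-Complex.I) • A) p with hC
  have hsmul : (Complex.I • A)ᴴ = (-Complex.I) • A := by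
    rw [Matrix.conjTranspose_smul, hA.eq]
    simp [Complex.conj_I]
  have hBC : Bᴴ = C := by
    rw [hB, hC, hp, map_sum, map_sum, Matrix.conjTranspose_sum]
    refine Finset.sum_congr rfl fun j hj => ?_
    rw [map_mul, map_mul, Polynomial.aeval_C, Polynomial.aeval_C,
      Polynomial.aeval_X_pow, Polynomial.aeval_X_pow]
    rw [Algebra.algebraMap_eq_smul_one, smul_one_mul, smul_one_mul,
      Matrix.conjTranspose_smul, Matrix.conjTranspose_pow, hsmul]
    congr 1
    simp [Complex.star_def, map_div₀]
  have hCB : Cᴴ = B := by rw [← hBC, Matrix.conjTranspose_conjTranspose]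
  have hBd : IsUnit B.det := (Matrix.isUnit_iff_isUnit_det B).mp hinv
  have hCd : IsUnit C.det := by
    rw [← hBC, Matrix.det_conjTranspose]; exact hBd.star
  have hcomm : B * C = C * B := by
    have h1 : Polynomial.aeval ((-Complex.I) • A) p
        = Polynomial.aeval (Complex.I • A) (p.comp (-Polynomial.X)) := by
      rw [Polynomial.aeval_comp, map_neg, Polynomial.aeval_X, ← neg_smul]
    rw [hB, hC, h1, ← map_mul, ← map_mul, mul_comm]
  calc (C * B⁻¹)ᴴ * (C * B⁻¹)
      = B⁻¹ᴴ * (Cᴴ * C) * B⁻¹ := by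
        rw [Matrix.conjTranspose_mul]; noncomm_ring
    _ = C⁻¹ * (B * C) * B⁻¹ := by rw [Matrix.conjTranspose_nonsing_inv, hBC, hCB]
    _ = C⁻¹ * C * (B * B⁻¹) := by rw [hcomm]; noncomm_ring
    _ = 1 := by rw [Matrix.nonsing_inv_mul _ hCd, Matrix.mul_nonsing_inv _ hBd, one_mul]
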